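/- Let n ≥ 1 and let ∂ be the unique ℤ-linear derivation on the polynomial ring ℤ[x_1,…,x_n] with ∂(x_i) = x_i² for all i. Let Δ = ∏_{1 ≤ i < j ≤ n} (x_j − x_i) be the Vandermonde determinant. Then ∂(Δ) = (n−1)·e_1·Δ, where e_1 = x_1 + ⋯ + x_n is the first elementary symmetric polynomial. -/

import Mathlib

open MvPolynomial

lemma deriv_prod {A : Type*} [CommRing A] {R : Type*} [CommSemiring R] [Algebra R A]
    [Module R A] (D : Derivation R A A)
    {ι : Type*} [DecidableEq ι] (s : Finset ι) (f : ι → A) :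
    D (∏ i ∈ s, f i) = ∑ i ∈ s, (∏ j ∈ s.erase i, f j) * D (f i) := by
  induction s using Finset.induction_on with
  | empty => simp
  | insert _ _ hx ih =>
    rename_i a s
    rw [Finset.prod_insert hx, D.leibniz, Finset.sum_insert hx, ih,
      Finset.erase_insert hx, smul_eq_mul, smul_eq_mul, Finset.mul_sum, add_comm]
    congr 1
    apply Finset.sum_congr rfl
    intro i hi
    rw [Finset.erase_insert_of_ne (ne_of_mem_of_not_mem hi hx).symm,
      Finset.prod_insert (fun h => hx (Finset.mem_of_mem_erase h))]
    ring

lemma sum_pairs {A : Type*} [AddCommMonoid A] (n : ℕ) (f : Fin n → A) :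
    ∑ p ∈ Finset.univ.filter (fun p : Fin n × Fin n => p.1 < p.2), (f p.1 + f p.2)
      = (n - 1) • ∑ i, f i := by
  rw [Finset.sum_add_distrib]
  have h2 : ∑ p ∈ Finset.univ.filter (fun p : Fin n × Fin n => p.1 < p.2), f p.2
      = ∑ p ∈ Finset.univ.filter (fun p : Fin n × Fin n => p.2 < p.1), f p.1 := by
    apply Finset.sum_nbij' (fun p => Prod.swap p) (fun p => Prod.swap p) <;> simp
  rw [h2, ← Finset.sum_union]
  · have hu : (Finset.univ.filter (fun p : Fin n × Fin n => p.1 < p.2)) ∪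
        (Finset.univ.filter (fun p : Fin n × Fin n => p.2 < p.1))
        = Finset.univ.filter (fun p : Fin n × Fin n => p.1 ≠ p.2) := by
      ext p
      simp only [Finset.mem_union, Finset.mem_filter, Finset.mem_univ, true_and, ne_eq,
        ← Fin.val_ne_iff]
      omega
    rw [hu, Finset.sum_filter, Fintype.sum_prod_type]
    trans (∑ i : Fin n, (n - 1) • f i)
    · refine Finset.sum_congr rfl fun i _ => ?_
      have : (∑ j : Fin n, if i ≠ j then f i else 0)
          = (Finset.univ.filter (fun j => i ≠ j)).card • f i := by
        rw [← Finset.sum_const, Finset.sum_filter]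
      rw [this, Finset.filter_ne, Finset.card_erase_of_mem (Finset.mem_univ i),
        Finset.card_univ, Fintype.card_fin]
    · rw [← Finset.smul_sum]
  · rw [Finset.disjoint_filter]
    intro p _ h1
    simp only [not_lt]
    exact le_of_lt h1

theorem vandermonde_derivation (n : ℕ) (hn : 1 ≤ n)
    (D : Derivation ℤ (MvPolynomial (Fin n) ℤ) (MvPolynomial (Fin n) ℤ))
    (hD : ∀ i, D (X i) = X i ^ 2) :
    D (∏ p ∈ Finset.univ.filter (fun p : Fin n × Fin n => p.1 < p.2), (X p.2 - X p.1)) =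
      C ((n : ℤ) - 1) * ((∑ i, X i) *
        ∏ p ∈ Finset.univ.filter (fun p : Fin n × Fin n => p.1 < p.2), (X p.2 - X p.1)) := by
  set S := Finset.univ.filter (fun p : Fin n × Fin n => p.1 < p.2) with hS
  set Δ := ∏ p ∈ S, (X p.2 - X p.1 : MvPolynomial (Fin n) ℤ) with hΔ
  have key : ∀ p ∈ S, (∏ q ∈ S.erase p, (X q.2 - X q.1 : MvPolynomial (Fin n) ℤ))
      * D (X p.2 - X p.1) = (X p.1 + X p.2) * Δ := by
    intro p hp
    have hd : D (X p.2 - X p.1) = (X p.1 + X p.2) * (X p.2 - X p.1) := by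
      rw [map_sub, hD, hD]; ring
    rw [hd, hΔ, ← Finset.prod_erase_mul S _ hp]
    ring
  rw [hΔ, deriv_prod, Finset.sum_congr rfl key, ← hΔ, ← Finset.sum_mul, sum_pairs,
    ← Nat.cast_smul_eq_nsmul ℤ, Nat.cast_sub hn, Nat.cast_one,
    smul_eq_C_mul, mul_assoc]
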